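/- Let β, β̂ ∈ ℝᵖ be nonzero vectors, let K ⊆ {k : β_k ≠ 0} be a nonempty set of indices such that β̂_k = 0 for every k ∈ K, and set ξ = min { β_k² / ‖β‖₂² : β_k ≠ 0 }. Then ‖P(β̂) − P(β)‖_F² ≥ 2 |K| ξ − |K|² ξ². -/
import Mathlib


open Matrix BigOperators Finset

/-- ℓ¹ norm of a vector in ℝᵖ. -/
noncomputable def l1 {p : ℕ} (v : Fin p → ℝ) : ℝ := ∑ k, |v k|

/-- ℓ² norm of a vector in ℝᵖ. -/
noncomputable def l2 {p : ℕ} (v : Fin p → ℝ) : ℝ := Real.sqrt (∑ k, (v k) ^ 2)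

/-- ℓ^∞ norm of a vector in ℝᵖ (the sup norm on `Fin p → ℝ`). -/
noncomputable def linf {p : ℕ} (v : Fin p → ℝ) : ℝ := ‖v‖

/-- The restriction `v_S` of a vector to an index set `S` (zero outside `S`). -/
def vres {p : ℕ} (S : Finset (Fin p)) (v : Fin p → ℝ) : Fin p → ℝ :=
  fun k => if k ∈ S then v k else 0

/-- The CHOMP objective `F(β) = (1/2)‖Lᵀβ − κ‖₂² + μ‖β‖₁`. -/
noncomputable def chompF {p : ℕ} (L : Matrix (Fin p) (Fin p) ℝ) (κ : Fin p → ℝ) (μ : ℝ)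
    (β : Fin p → ℝ) : ℝ :=
  (1 / 2) * (l2 (Lᵀ.mulVec β - κ)) ^ 2 + μ * l1 β

/-- The projection matrix `P(v) = v (vᵀv)⁻¹ vᵀ` associated with a vector `v`
(by the junk-value convention `0⁻¹ = 0` in `ℝ`, this gives `P(0) = 0`). -/
noncomputable def proj {p : ℕ} (v : Fin p → ℝ) : Matrix (Fin p) (Fin p) ℝ :=
  (v ⬝ᵥ v)⁻¹ • Matrix.vecMulVec v v

/-- The Frobenius norm of a matrix. -/
noncomputable def frob {p : ℕ} (A : Matrix (Fin p) (Fin p) ℝ) : ℝ :=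
  Real.sqrt (∑ i, ∑ j, (A i j) ^ 2)

/-- the key underfitting bound for the projection information
criterion: if `βh` vanishes on a nonempty set `K` of indices of nonzero
components of `β`, and `ξ = min { β_k²/‖β‖₂² : β_k ≠ 0 }`, then
`‖P(βh) − P(β)‖_F² ≥ 2|K|ξ − |K|²ξ²`. -/
theorem projection_underfit_xi_bound {p : ℕ}
    (β βh : Fin p → ℝ) (hβ : β ≠ 0) (hβh : βh ≠ 0)
    (K : Finset (Fin p)) (hKne : K.Nonempty)
    (hKsub : ∀ k ∈ K, β k ≠ 0) (hK0 : ∀ k ∈ K, βh k = 0)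
    (ξ : ℝ)
    (hξ_le : ∀ k, β k ≠ 0 → ξ ≤ (β k) ^ 2 / (l2 β) ^ 2)
    (hξ_mem : ∃ k, β k ≠ 0 ∧ ξ = (β k) ^ 2 / (l2 β) ^ 2) :
    2 * (K.card : ℝ) * ξ - (K.card : ℝ) ^ 2 * ξ ^ 2 ≤
      (frob (proj βh - proj β)) ^ 2 := by
  set a : ℝ := βh ⬝ᵥ βh with ha_def
  set b : ℝ := β ⬝ᵥ β with hb_def
  set c : ℝ := βh ⬝ᵥ β with hc_def
  have ha_eq : a = ∑ k, (βh k) ^ 2 := by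
    simp [ha_def, dotProduct, sq]
  have hb_eq : b = ∑ k, (β k) ^ 2 := by
    simp [hb_def, dotProduct, sq]
  have ha_pos : 0 < a := by
    rw [ha_eq]
    obtain ⟨k, hk⟩ : ∃ k, βh k ≠ 0 := by
      by_contra h; push_neg at h; exact hβh (funext h)
    have : (0:ℝ) < (βh k)^2 := by positivity
    refine lt_of_lt_of_le this ?_
    exact Finset.single_le_sum (f := fun k => (βh k)^2) (fun i _ => by positivity)
      (Finset.mem_univ k)
  have hb_pos : 0 < b := by
    rw [hb_eq]
    obtain ⟨k, hk⟩ : ∃ k, β k ≠ 0 := by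
      by_contra h; push_neg at h; exact hβ (funext h)
    have : (0:ℝ) < (β k)^2 := by positivity
    refine lt_of_lt_of_le this ?_
    exact Finset.single_le_sum (f := fun k => (β k)^2) (fun i _ => by positivity)
      (Finset.mem_univ k)
  have hl2 : (l2 β) ^ 2 = b := by
    rw [l2, Real.sq_sqrt (by positivity), hb_eq]
  -- ξ ≥ 0
  have hξ_nonneg : 0 ≤ ξ := by
    obtain ⟨k, hk, hkeq⟩ := hξ_mem
    rw [hkeq, hl2]; positivity
  -- t = sum over K of β_k²
  set t : ℝ := ∑ k ∈ K, (β k) ^ 2 with ht_def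
  have ht_le_b : t ≤ b := by
    rw [hb_eq, ht_def]
    exact Finset.sum_le_sum_of_subset_of_nonneg (Finset.subset_univ K)
      (fun i _ _ => by positivity)
  -- each term in K is ≥ ξ * b
  have ht_ge : (K.card : ℝ) * (ξ * b) ≤ t := by
    rw [ht_def]
    have := Finset.card_nsmul_le_sum K (fun k => (β k)^2) (ξ * b)
      (fun k hk => by
        have h1 := hξ_le k (hKsub k hk)
        rw [hl2] at h1
        calc ξ * b ≤ ((β k)^2 / b) * b := by
              exact mul_le_mul_of_nonneg_right h1 hb_pos.le
          _ = (β k)^2 := div_mul_cancel₀ _ hb_pos.ne')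
    simpa [nsmul_eq_mul] using this
  -- Cauchy–Schwarz: c² ≤ a * (b - t)
  have hcs : c ^ 2 ≤ a * (b - t) := by
    have hcw : c = ∑ k, βh k * (if k ∈ K then 0 else β k) := by
      rw [hc_def, dotProduct]
      refine Finset.sum_congr rfl fun k _ => ?_
      by_cases hk : k ∈ K
      · simp [hk, hK0 k hk]
      · simp [hk]
    have := Finset.sum_mul_sq_le_sq_mul_sq Finset.univ (fun k => βh k)
      (fun k => if k ∈ K then 0 else β k)
    rw [← hcw] at this
    have hw : (∑ k, (if k ∈ K then 0 else β k) ^ 2) = b - t := by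
      rw [hb_eq, ht_def, eq_sub_iff_add_eq,
        ← Finset.sum_filter_add_sum_filter_not Finset.univ (· ∈ K) (fun k => (β k)^2)]
      have h1 : ∑ k ∈ Finset.univ.filter (· ∈ K), (β k)^2 = ∑ k ∈ K, (β k)^2 := by
        refine Finset.sum_congr ?_ fun _ _ => rfl
        ext k; simp
      have h2 : (∑ k, (if k ∈ K then 0 else β k) ^ 2)
          = ∑ k ∈ Finset.univ.filter (¬ · ∈ K), (β k)^2 := by
        rw [Finset.sum_filter]
        refine Finset.sum_congr rfl fun k _ => ?_
        by_cases hk : k ∈ K <;> simp [hk]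
      rw [h2, h1]; ring
    rw [hw, ← ha_eq] at this
    exact this
  -- Frobenius norm computation
  have hfrob : (frob (proj βh - proj β)) ^ 2 = 2 - 2 * (c ^ 2 / (a * b)) := by
    have hsum : ∑ i, ∑ j, ((proj βh - proj β) i j) ^ 2
        = a⁻¹^2 * (a * a) - 2 * (a⁻¹ * b⁻¹) * (c * c) + b⁻¹^2 * (b * b) := by
      have hterm : ∀ i j : Fin p, ((proj βh - proj β) i j) ^ 2
          = a⁻¹^2 * ((βh i * βh i) * (βh j * βh j))
            - 2 * (a⁻¹ * b⁻¹) * ((βh i * β i) * (βh j * β j))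
            + b⁻¹^2 * ((β i * β i) * (β j * β j)) := by
        intro i j
        simp only [proj, Matrix.sub_apply, Matrix.smul_apply, Matrix.vecMulVec_apply,
          smul_eq_mul, ← ha_def, ← hb_def]
        ring
      simp only [hterm]
      rw [ha_eq, hb_eq, hc_def]
      simp only [Finset.sum_add_distrib, Finset.sum_sub_distrib, ← Finset.mul_sum,
        ← Finset.sum_mul, dotProduct]
      simp [sq]
    rw [frob, Real.sq_sqrt (by positivity), hsum]
    field_simp
    ring
  rw [hfrob]
  -- combine
  have h1 : c ^ 2 / (a * b) ≤ (b - t) / b := by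
    rw [div_le_div_iff₀ (by positivity) hb_pos]
    calc c ^ 2 * b ≤ (a * (b - t)) * b := by
          refine mul_le_mul_of_nonneg_right hcs hb_pos.le
      _ = (b - t) * (a * b) := by ring
  have h2 : (b - t) / b ≤ 1 - (K.card : ℝ) * ξ := by
    rw [div_le_iff₀ hb_pos]
    nlinarith [ht_ge]
  have h3 : 2 * (K.card : ℝ) * ξ ≤ 2 - 2 * (c ^ 2 / (a * b)) := by
    nlinarith [h1.trans h2]
  nlinarith [h3, sq_nonneg ((K.card : ℝ) * ξ)]
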